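/- arXiv:1305.6530 — 7 statements merged into one kernel-verified Lean document; each statement's English description precedes it below -/
import Mathlib

section
/- If x and y are proximal points of a compact metric dynamical system (X,T) and y is uniformly recurrent, then there exists a strictly increasing sequence (n_i) of natural numbers such that the IP-limit of T^n x along finite sums of (n_i) equals y; that is, for every ε > 0 there exists k such that for every nonempty finite sum n of terms n_i with i ≥ k (distinct indices), d(T^n x, y) < ε. -/
/-- A set `S ⊆ ℕ` is syndetic if it has bounded gaps. -/
def Syndetic (S : Set ℕ) : Prop :=
  ∃ m : ℕ, ∀ x : ℕ, ∃ n ∈ S, x ≤ n ∧ n ≤ x + m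

/-- A point `y` is uniformly recurrent for `T` if all its ε-return-time sets are syndetic. -/
def UniformlyRecurrent {X : Type*} [MetricSpace X] (T : X → X) (y : X) : Prop :=
  ∀ ε : ℝ, 0 < ε → Syndetic {n : ℕ | dist (T^[n] y) y < ε}

/-- Points `x, y` are proximal: for every `ε > 0` there are infinitely many `n`
with `dist (T^[n] x) (T^[n] y) < ε`. -/
def Proximal {X : Type*} [MetricSpace X] (T : X → X) (x y : X) : Prop :=
  ∀ ε : ℝ, 0 < ε → ∀ N : ℕ, ∃ n ≥ N, dist (T^[n] x) (T^[n] y) < ε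

/-- `FS a k` is the set of all finite sums of terms of `a` with distinct indices `≥ k`. -/
def FS (a : ℕ → ℕ) (k : ℕ) : Set ℕ :=
  {s | ∃ F : Finset ℕ, F.Nonempty ∧ (∀ i ∈ F, k ≤ i) ∧ s = ∑ i ∈ F, a i}

/-- The orbit closure of a point `y` under `T`. -/
def orbitClosure {X : Type*} [TopologicalSpace X] (T : X → X) (y : X) : Set X :=
  closure (Set.range fun n : ℕ => T^[n] y)

noncomputable def eps : ℕ → ℝ := fun k => (2:ℝ)⁻¹ ^ k
lemma eps_pos (k : ℕ) : 0 < eps k := pow_pos (by norm_num) k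
lemma eps_anti {j k : ℕ} (h : j ≤ k) : eps k ≤ eps j :=
  pow_le_pow_of_le_one (by norm_num) (by norm_num) h
lemma eps_gap (m : ℕ) : 0 < eps m - eps (m+1) := by
  have h : (0:ℝ) < (2:ℝ)⁻¹ ^ m := pow_pos (by norm_num) m
  simp only [eps, pow_succ]
  nlinarith
lemma unif {X : Type*} [MetricSpace X] [CompactSpace X] (T : X → X) (hT : Continuous T)
    (M : ℕ) {η : ℝ} (hη : 0 < η) :
    ∃ δ > 0, ∀ j ≤ M, ∀ u v : X, dist u v < δ → dist (T^[j] u) (T^[j] v) < η := by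
  induction M with
  | zero =>
    refine ⟨η, hη, ?_⟩
    intro j hj u v h
    interval_cases j
    simpa using h
  | succ M ih =>
    obtain ⟨δ, hδ, H⟩ := ih
    have h1 : UniformContinuous (T^[M+1]) :=
      CompactSpace.uniformContinuous_of_continuous (hT.iterate _)
    rw [Metric.uniformContinuous_iff] at h1
    obtain ⟨δ', hδ', H'⟩ := h1 η hη
    refine ⟨min δ δ', lt_min hδ hδ', ?_⟩
    intro j hj u v h
    rcases Nat.lt_succ_iff_lt_or_eq.mp (Nat.lt_succ_of_le hj) with hj' | hj'
    · exact H j (Nat.lt_succ_iff.mp hj') u v (h.trans_le (min_le_left _ _))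
    · subst hj'; exact H' (h.trans_le (min_le_right _ _))

lemma proxrec {X : Type*} [MetricSpace X] [CompactSpace X] {T : X → X} (hT : Continuous T)
    {x y : X} (hprox : Proximal T x y) (hur : UniformlyRecurrent T y)
    {ε : ℝ} (hε : 0 < ε) (N : ℕ) :
    ∃ n ≥ N, dist (T^[n] x) y < ε ∧ dist (T^[n] y) y < ε := by
  obtain ⟨m, hm⟩ := hur (ε/2) (half_pos hε)
  obtain ⟨δ, hδ, H⟩ := unif T hT m (half_pos hε)
  obtain ⟨n, hn, hd⟩ := hprox (min δ (ε/2)) (lt_min hδ (half_pos hε)) N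
  obtain ⟨n', hn', hle, hub⟩ := hm n
  simp only [Set.mem_setOf_eq] at hn'
  refine ⟨n', hn.trans hle, ?_, hn'.trans (by linarith)⟩
  have hsplit : T^[n'] = fun z => T^[n' - n] (T^[n] z) := by
    funext z
    rw [← Function.iterate_add_apply]
    congr 1
    omega
  have h1 : dist (T^[n'] x) (T^[n'] y) < ε/2 := by
    rw [hsplit]
    exact H (n' - n) (by omega) _ _ (hd.trans_le (min_le_left _ _))
  calc dist (T^[n'] x) y ≤ dist (T^[n'] x) (T^[n'] y) + dist (T^[n'] y) y := dist_triangle _ _ _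
    _ < ε/2 + ε/2 := add_lt_add h1 hn'
    _ = ε := add_halves ε

/-- The inductive invariant. -/
def IPInv {X : Type*} [MetricSpace X] (T : X → X) (x y : X) (f : ℕ → ℕ) (m : ℕ) : Prop :=
  (∀ i, i + 1 < m → f i < f (i+1)) ∧
  ∀ F : Finset ℕ, ∀ hF : F.Nonempty, (∀ i ∈ F, i < m) →
    dist (T^[∑ i ∈ F, f i] x) y ≤ eps (F.min' hF) - eps m ∧
    dist (T^[∑ i ∈ F, f i] y) y ≤ eps (F.min' hF) - eps m

lemma inv_congr {X : Type*} [MetricSpace X] {T : X → X} {x y : X} {f f' : ℕ → ℕ} {m : ℕ}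
    (h : ∀ i < m, f i = f' i) (hf : IPInv T x y f m) : IPInv T x y f' m := by
  constructor
  · intro i hi
    rw [← h i (by omega), ← h (i+1) hi]
    exact hf.1 i hi
  · intro F hF hFm
    have hs : ∑ i ∈ F, f' i = ∑ i ∈ F, f i :=
      Finset.sum_congr rfl fun i hi => (h i (hFm i hi)).symm
    rw [hs]
    exact hf.2 F hF hFm

lemma min'_insert_of_lt {m : ℕ} {G : Finset ℕ} (hG : G.Nonempty) (hGm : ∀ i ∈ G, i < m)
    (hF : (insert m G).Nonempty) : (insert m G).min' hF = G.min' hG := by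
  apply le_antisymm
  · exact Finset.min'_le _ _ (Finset.mem_insert_of_mem (G.min'_mem hG))
  · have h1 := (insert m G).min'_mem hF
    rcases Finset.mem_insert.mp h1 with h | h
    · exfalso
      have := Finset.min'_le (insert m G) (G.min' hG)
        (Finset.mem_insert_of_mem (G.min'_mem hG))
      have := hGm _ (G.min'_mem hG)
      omega
    · exact Finset.min'_le _ _ h

lemma inv_extend {X : Type*} [MetricSpace X] [CompactSpace X] {T : X → X} (hT : Continuous T)
    {x y : X} (hprox : Proximal T x y) (hur : UniformlyRecurrent T y)
    {f : ℕ → ℕ} {m : ℕ} (hf : IPInv T x y f m) :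
    ∃ n, IPInv T x y (Function.update f m n) (m+1) := by
  set M := ∑ i ∈ Finset.range m, f i with hM
  obtain ⟨δ, hδ, H⟩ := unif T hT M (eps_gap m)
  obtain ⟨n, hn, hdx, hdy⟩ := proxrec hT hprox hur (lt_min hδ (eps_gap m)) (M+1)
  have hdx' : dist (T^[n] x) y < δ := hdx.trans_le (min_le_left _ _)
  have hdy' : dist (T^[n] y) y < δ := hdy.trans_le (min_le_left _ _)
  have hdx2 : dist (T^[n] x) y ≤ eps m - eps (m+1) := (hdx.trans_le (min_le_right _ _)).le
  have hdy2 : dist (T^[n] y) y ≤ eps m - eps (m+1) := (hdy.trans_le (min_le_right _ _)).le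
  have hfM : ∀ i < m, f i ≤ M := fun i hi =>
    Finset.single_le_sum (fun j _ => Nat.zero_le (f j)) (Finset.mem_range.mpr hi)
  refine ⟨n, ?_, ?_⟩
  · intro i hi
    have hi' : i < m := by omega
    rcases eq_or_lt_of_le (Nat.succ_le_of_lt hi') with h | h
    · rw [Function.update_apply, Function.update_apply, if_neg (by omega), if_pos h]
      have := hfM i hi'
      omega
    · rw [Function.update_apply, Function.update_apply, if_neg (by omega), if_neg (by omega)]
      exact hf.1 i h
  · intro F hF hFm
    by_cases hmF : m ∈ F
    · set G := F.erase m with hG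
      have hGm : ∀ i ∈ G, i < m := by
        intro i hi
        have h1 := Finset.mem_erase.mp hi
        have := hFm i h1.2
        omega
      have hsum : ∑ i ∈ F, Function.update f m n i = n + ∑ i ∈ G, f i := by
        rw [← Finset.add_sum_erase _ _ hmF, Function.update_self]
        congr 1
        exact Finset.sum_congr rfl fun i hi =>
          Function.update_of_ne (Finset.mem_erase.mp hi).1 _ _
      rcases G.eq_empty_or_nonempty with hGe | hGne
      · have hFeq : F = {m} := by
          rw [hG] at hGe
          ext j
          simp only [Finset.mem_singleton]
          constructor
          · intro hj
            by_contra hne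
            exact (Finset.notMem_empty j) (hGe ▸ Finset.mem_erase.mpr ⟨hne, hj⟩)
          · rintro rfl; exact hmF
        subst hFeq
        rw [hsum, hGe]
        simp only [Finset.sum_empty, Nat.add_zero, Finset.min'_singleton]
        exact ⟨hdx2, hdy2⟩
      · have hFins : F = insert m G := by
          rw [hG, Finset.insert_erase hmF]
        have hmin : F.min' hF = G.min' hGne := by
          rw [show F.min' hF = (insert m G).min' (by rw [← hFins]; exact hF) by congr 1
          ]
          exact min'_insert_of_lt hGne hGm _
        set s := ∑ i ∈ G, f i with hs
        have hsM : s ≤ M := Finset.sum_le_sum_of_subset (fun i hi => Finset.mem_range.mpr (hGm i hi))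
        have hit : ∀ z : X, T^[s + n] z = T^[s] (T^[n] z) := fun z => Function.iterate_add_apply T s n z
        obtain ⟨hGx, hGy⟩ := hf.2 G hGne hGm
        rw [← hs] at hGx hGy
        rw [hsum, hmin]
        constructor
        · rw [Nat.add_comm, hit]
          calc dist (T^[s] (T^[n] x)) y
              ≤ dist (T^[s] (T^[n] x)) (T^[s] y) + dist (T^[s] y) y := dist_triangle _ _ _
            _ ≤ (eps m - eps (m+1)) + (eps (G.min' hGne) - eps m) :=
                add_le_add (H s hsM _ _ hdx').le hGy
            _ = eps (G.min' hGne) - eps (m+1) := by ring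
        · rw [Nat.add_comm, hit]
          calc dist (T^[s] (T^[n] y)) y
              ≤ dist (T^[s] (T^[n] y)) (T^[s] y) + dist (T^[s] y) y := dist_triangle _ _ _
            _ ≤ (eps m - eps (m+1)) + (eps (G.min' hGne) - eps m) :=
                add_le_add (H s hsM _ _ hdy').le hGy
            _ = eps (G.min' hGne) - eps (m+1) := by ring
    · have hFm' : ∀ i ∈ F, i < m := by
        intro i hi
        have := hFm i hi
        rcases Nat.lt_succ_iff_lt_or_eq.mp this with h | h
        · exact h
        · exact absurd (h ▸ hi) hmF
      have hsum : ∑ i ∈ F, Function.update f m n i = ∑ i ∈ F, f i :=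
        Finset.sum_congr rfl fun i hi => Function.update_of_ne (by have := hFm' i hi; omega) _ _
      obtain ⟨h1, h2⟩ := hf.2 F hF hFm'
      rw [hsum]
      have := (eps_gap m).le
      have hmono : eps (m+1) ≤ eps m := eps_anti (by omega)
      exact ⟨h1.trans (by linarith), h2.trans (by linarith)⟩

open Classical in
/-- The recursively constructed sequence (with junk values beyond the current stage). -/
noncomputable def ipSeq {X : Type*} [MetricSpace X] (T : X → X) (x y : X) : ℕ → (ℕ → ℕ)
  | 0 => fun _ => 0
  | (m+1) =>
    let f := ipSeq T x y m
    Function.update f m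
      (if h : ∃ n, IPInv T x y (Function.update f m n) (m+1) then h.choose else 0)

lemma ipSeq_inv {X : Type*} [MetricSpace X] [CompactSpace X] {T : X → X} (hT : Continuous T)
    {x y : X} (hprox : Proximal T x y) (hur : UniformlyRecurrent T y) (m : ℕ) :
    IPInv T x y (ipSeq T x y m) m := by
  induction m with
  | zero =>
    constructor
    · intro i hi; omega
    · intro F hF hFm
      obtain ⟨i, hi⟩ := hF
      exact absurd (hFm i hi) (by omega)
  | succ m ih =>
    have hex : ∃ n, IPInv T x y (Function.update (ipSeq T x y m) m n) (m+1) :=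
      inv_extend hT hprox hur ih
    show IPInv T x y (Function.update (ipSeq T x y m) m _) (m+1)
    rw [dif_pos hex]
    exact hex.choose_spec

lemma ipSeq_stable {X : Type*} [MetricSpace X] (T : X → X) (x y : X) :
    ∀ m m', m ≤ m' → ∀ i < m, ipSeq T x y m' i = ipSeq T x y m i := by
  intro m m' h
  induction m' with
  | zero => intro i hi; omega
  | succ m' ih =>
    intro i hi
    rcases Nat.lt_succ_iff_lt_or_eq.mp (Nat.lt_succ_of_le h) with h' | h'
    · have hm : m ≤ m' := by omega
      rw [← ih hm i hi]
      show Function.update (ipSeq T x y m') m' _ i = _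
      rw [Function.update_of_ne (by omega)]
    · subst h'; rfl

/-- If `x, y` are proximal and `y` is uniformly recurrent, then there is a strictly
increasing sequence `(n_i)` with `IP-lim_{n → FS((n_i))} T^[n] x = y`. -/
theorem stmt2 {X : Type*} [MetricSpace X] [CompactSpace X]
    (T : X → X) (hT : Continuous T) (x y : X)
    (hprox : Proximal T x y) (hur : UniformlyRecurrent T y) :
    ∃ a : ℕ → ℕ, StrictMono a ∧
      ∀ ε : ℝ, 0 < ε → ∃ k : ℕ, ∀ s ∈ FS a k, dist (T^[s] x) y < ε := by
  set a : ℕ → ℕ := fun i => ipSeq T x y (i+1) i with ha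
  have hainv : ∀ m, IPInv T x y a m := by
    intro m
    refine inv_congr (f := ipSeq T x y m) ?_ (ipSeq_inv hT hprox hur m)
    intro i hi
    exact ipSeq_stable T x y (i+1) m hi i (by omega)
  refine ⟨a, ?_, ?_⟩
  · apply strictMono_nat_of_lt_succ
    intro i
    exact (hainv (i+2)).1 i (by omega)
  · intro ε hε
    obtain ⟨k, hk⟩ := exists_pow_lt_of_lt_one hε (show (2:ℝ)⁻¹ < 1 by norm_num)
    refine ⟨k, ?_⟩
    rintro s ⟨F, hF, hFk, rfl⟩
    set m := F.max' hF + 1 with hm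
    have hFm : ∀ i ∈ F, i < m := fun i hi => by
      have := F.le_max' i hi; omega
    have h1 := ((hainv m).2 F hF hFm).1
    have h2 : eps (F.min' hF) ≤ eps k := eps_anti (Finset.le_min' _ _ _ hFk)
    have h3 : 0 < eps m := eps_pos m
    have hk' : eps k < ε := hk
    calc dist (T^[∑ i ∈ F, a i] x) y ≤ eps (F.min' hF) - eps m := h1
      _ < eps k := by linarith
      _ < ε := hk'
end

section
/- If x and y are proximal and y is uniformly recurrent in a compact metric dynamical system (X,T), then for every open neighborhood U of y there exists p ∈ ℕ with T^p x ∈ U and T^p y ∈ U. -/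
/-- If `x, y` are proximal and `y` is uniformly recurrent, then for every open
neighborhood `U` of `y` there is `p` with `T^[p] x ∈ U` and `T^[p] y ∈ U`. -/
theorem stmt3 {X : Type*} [MetricSpace X] [CompactSpace X]
    (T : X → X) (hT : Continuous T) (x y : X)
    (hprox : Proximal T x y) (hur : UniformlyRecurrent T y)
    (U : Set X) (hU : IsOpen U) (hyU : y ∈ U) :
    ∃ p : ℕ, T^[p] x ∈ U ∧ T^[p] y ∈ U := by
  obtain ⟨ε, hε, hball⟩ := Metric.isOpen_iff.mp hU y hyU
  obtain ⟨m, hm⟩ := hur (ε/2) (by linarith)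
  have hδ : ∀ j : ℕ, ∃ δ > 0, ∀ a b : X, dist a b < δ →
      dist (T^[j] a) (T^[j] b) < ε/2 := by
    intro j
    have hc : Continuous (T^[j]) := hT.iterate j
    have huc := CompactSpace.uniformContinuous_of_continuous hc
    rw [Metric.uniformContinuous_iff] at huc
    obtain ⟨δ, hδp, h⟩ := huc (ε/2) (by linarith)
    exact ⟨δ, hδp, fun a b hab => h hab⟩
  choose δ hδpos hδ using hδ
  have hne : (Finset.range (m+1)).Nonempty := ⟨0, by simp⟩
  set δ0 := (Finset.range (m+1)).inf' hne δ with hδ0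
  have hδ0pos : 0 < δ0 := by
    rw [hδ0, Finset.lt_inf'_iff]
    exact fun i _ => hδpos i
  obtain ⟨n, _, hn⟩ := hprox δ0 hδ0pos 0
  obtain ⟨r, hr, hnr, hrm⟩ := hm n
  set j := r - n with hj
  have hjm : j ≤ m := by omega
  have hrnj : r = j + n := by omega
  have hn' : dist (T^[n] x) (T^[n] y) < δ j := by
    refine lt_of_lt_of_le hn ?_
    exact Finset.inf'_le δ (Finset.mem_range.mpr (by omega))
  have h1 : dist (T^[r] x) (T^[r] y) < ε/2 := by
    rw [hrnj, Function.iterate_add_apply, Function.iterate_add_apply]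
    exact hδ j _ _ hn'
  have h2 : dist (T^[r] y) y < ε/2 := hr
  refine ⟨r, hball ?_, hball ?_⟩
  · have := dist_triangle (T^[r] x) (T^[r] y) y
    simp only [Metric.mem_ball]
    linarith
  · simpa [Metric.mem_ball] using lt_of_lt_of_le h2 (by linarith)
end

section
/- Let (n_i) be a strictly increasing sequence of natural numbers and F = {X ⊆ ℕ | ∃k, FS((n_i)_{i≥k}) ⊆ X}. Then F is idempotent in the sense that for every X ∈ F, the set {n ∈ ℕ | X − n ∈ F} belongs to F, where X − n = {m ∈ ℕ | m + n ∈ X}. -/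
/-- The filter `F = {X | ∃ k, FS((n_i)_{i≥k}) ⊆ X}` is idempotent:
for every `X ∈ F`, `{n | X − n ∈ F} ∈ F`. -/
theorem stmt5 (a : ℕ → ℕ) (ha : StrictMono a) :
    ∀ X : Set ℕ, X ∈ {X : Set ℕ | ∃ k, FS a k ⊆ X} →
      {n : ℕ | {m : ℕ | m + n ∈ X} ∈ {X : Set ℕ | ∃ k, FS a k ⊆ X}}
        ∈ {X : Set ℕ | ∃ k, FS a k ⊆ X} := by
  rintro X ⟨k, hk⟩
  refine ⟨k, ?_⟩
  rintro n ⟨F, hFne, hFk, rfl⟩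
  refine ⟨F.max' hFne + 1, ?_⟩
  rintro m ⟨G, hGne, hGk, rfl⟩
  have hdisj : Disjoint G F := by
    rw [Finset.disjoint_left]
    intro i hiG hiF
    have h1 := hGk i hiG
    have h2 := Finset.le_max' F i hiF
    omega
  apply hk
  refine ⟨G ∪ F, hGne.mono Finset.subset_union_left, ?_, ?_⟩
  · intro i hi
    rcases Finset.mem_union.1 hi with h | h
    · have := hGk i h
      have := hFk _ (F.max'_mem hFne)
      omega
    · exact hFk i h
  · rw [Finset.sum_union hdisj]
end

section
/- Let U be an ultrafilter on ℕ such that for every X ∈ U the set {n ∈ ℕ | X − n ∈ U} is syndetic (a minimal ultrafilter) and let x, y be points of a compact metric space X with continuous T : X → X such that y = lim_{n→U} T^n x (the limit along U of the sequence T^n x). Then y is uniformly recurrent. -/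
/-- If `U` is a minimal ultrafilter and `y = lim_{n→U} T^[n] x`, then `y` is
uniformly recurrent. -/
theorem stmt7 (U : Ultrafilter ℕ)
    (hmin : ∀ X : Set ℕ, X ∈ U → Syndetic {n : ℕ | {m : ℕ | m + n ∈ X} ∈ U})
    {α : Type*} [MetricSpace α] [CompactSpace α]
    (T : α → α) (hT : Continuous T) (x y : α)
    (hy : ∀ ε : ℝ, 0 < ε → {n : ℕ | dist (T^[n] x) y < ε} ∈ U) :
    UniformlyRecurrent T y := by
  intro ε hε
  have hX : {m : ℕ | dist (T^[m] x) y < ε / 2} ∈ U := hy _ (by linarith)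
  obtain ⟨g, hg⟩ := hmin _ hX
  refine ⟨g, fun k => ?_⟩
  obtain ⟨n, hn, hk1, hk2⟩ := hg k
  refine ⟨n, ?_, hk1, hk2⟩
  have hc : ContinuousAt (T^[n]) y := (hT.iterate n).continuousAt
  rw [Metric.continuousAt_iff] at hc
  obtain ⟨δ, hδ, hδ'⟩ := hc (ε / 2) (by linarith)
  have hA : {m : ℕ | dist (T^[m] x) y < δ} ∈ U := hy δ hδ
  obtain ⟨m, hm1, hm2⟩ := Filter.nonempty_of_mem (Filter.inter_mem hA hn)
  have h1 : dist (T^[n] (T^[m] x)) (T^[n] y) < ε / 2 := hδ' hm1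
  have h2 : dist (T^[m + n] x) y < ε / 2 := hm2
  have heq : T^[n] (T^[m] x) = T^[m + n] x := by
    rw [add_comm, Function.iterate_add_apply]
  show dist (T^[n] y) y < ε
  calc dist (T^[n] y) y ≤ dist (T^[n] y) (T^[n] (T^[m] x)) + dist (T^[n] (T^[m] x)) y :=
        dist_triangle _ _ _
    _ < ε / 2 + ε / 2 := by
        rw [dist_comm (T^[n] y)]
        exact add_lt_add h1 (heq ▸ h2)
    _ = ε := by ring
end

section
/- Let U be an idempotent ultrafilter on ℕ, (X,d) a compact metric space, T : X → X continuous, x ∈ X, and suppose y = lim_{n→U} T^n x exists (limit along U). Then x and y are proximal: for every ε > 0 there are infinitely many n with d(T^n x, T^n y) < ε. -/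
/-- If `U` is an idempotent ultrafilter and `y = lim_{n→U} T^[n] x`, then `x` and `y`
are proximal. -/
theorem stmt8 (U : Ultrafilter ℕ)
    (hidem : ∀ X : Set ℕ, X ∈ U → {n : ℕ | {m : ℕ | m + n ∈ X} ∈ U} ∈ U)
    {α : Type*} [MetricSpace α] [CompactSpace α]
    (T : α → α) (hT : Continuous T) (x y : α)
    (hy : ∀ ε : ℝ, 0 < ε → {n : ℕ | dist (T^[n] x) y < ε} ∈ U) :
    Proximal T x y := by

  -- Step 1: y is recurrent along U
  have hUy : ∀ ε : ℝ, 0 < ε → {n : ℕ | dist (T^[n] y) y < ε} ∈ U := by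
    intro ε hε
    have hA : {k : ℕ | dist (T^[k] x) y < ε/2} ∈ U := hy _ (by linarith)
    have hC := hidem _ hA
    refine Filter.mem_of_superset hC ?_
    intro n hn
    have hcont : Continuous (T^[n]) := hT.iterate n
    obtain ⟨δ, hδ, hball⟩ := Metric.continuous_iff.mp hcont y (ε/2) (by linarith)
    have hB : {m : ℕ | dist (T^[m] x) y < δ} ∈ U := hy δ hδ
    have hmem : ({m : ℕ | m + n ∈ {k | dist (T^[k] x) y < ε/2}} ∩
        {m | dist (T^[m] x) y < δ}) ∈ U := Filter.inter_mem hn hB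
    obtain ⟨m, hm1, hm2⟩ := U.nonempty_of_mem hmem
    have heq : T^[n] (T^[m] x) = T^[m + n] x := by
      rw [add_comm, Function.iterate_add_apply]
    have h1 : dist (T^[n] (T^[m] x)) y < ε/2 := by rw [heq]; exact hm1
    have h2 : dist (T^[n] (T^[m] x)) (T^[n] y) < ε/2 := hball _ hm2
    calc dist (T^[n] y) y ≤ dist (T^[n] y) (T^[n] (T^[m] x)) + dist (T^[n] (T^[m] x)) y :=
          dist_triangle _ _ _
      _ < ε/2 + ε/2 := by rw [dist_comm]; exact add_lt_add h2 h1
      _ = ε := by ring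
  intro ε hε N
  by_cases h0 : ({0} : Set ℕ) ∈ U
  · -- U is principal at 0, hence x = y
    have hxy : x = y := by
      apply eq_of_forall_dist_le
      intro ε' hε'
      obtain ⟨m, hm1, hm2⟩ := U.nonempty_of_mem (Filter.inter_mem h0 (hy ε' hε'))
      simp only [Set.mem_singleton_iff] at hm1
      subst hm1
      simpa using hm2.le
    exact ⟨N, le_refl N, by rw [hxy]; simpa using hε⟩
  · -- no singleton is in U, hence every member of U is infinite
    have hsing : ∀ k : ℕ, ({k} : Set ℕ) ∉ U := by
      intro k hk
      have hD := hidem _ hk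
      obtain ⟨n, hn1, hn2⟩ := U.nonempty_of_mem (Filter.inter_mem hD hk)
      simp only [Set.mem_setOf_eq, Set.mem_singleton_iff] at hn1 hn2
      have : {m : ℕ | m + n = k} = {0} := by
        ext m
        simp only [Set.mem_singleton_iff, Set.mem_setOf_eq, hn2]
        omega
      rw [this] at hn1
      exact h0 hn1
    have hlarge : {n : ℕ | N ≤ n} ∈ U := by
      by_contra h
      have hcomp : {n : ℕ | N ≤ n}ᶜ ∈ U := Ultrafilter.compl_mem_iff_notMem.mpr h
      have hfin : ({n : ℕ | N ≤ n}ᶜ).Finite := by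
        apply Set.Finite.subset (Set.finite_Iio N)
        intro n hn
        simp only [Set.mem_compl_iff, Set.mem_setOf_eq, not_le] at hn
        simpa [Set.mem_Iio] using hn
      obtain ⟨a, -, ha⟩ := Ultrafilter.eq_pure_of_finite_mem hfin hcomp
      refine hsing a ?_
      rw [ha]
      exact Filter.mem_pure.mpr rfl
    have hmem : ({n : ℕ | N ≤ n} ∩ ({n | dist (T^[n] x) y < ε/2} ∩
        {n | dist (T^[n] y) y < ε/2})) ∈ U :=
      Filter.inter_mem hlarge (Filter.inter_mem (hy _ (by linarith)) (hUy _ (by linarith)))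
    obtain ⟨n, hn1, hn2, hn3⟩ := U.nonempty_of_mem hmem
    refine ⟨n, hn1, ?_⟩
    calc dist (T^[n] x) (T^[n] y) ≤ dist (T^[n] x) y + dist y (T^[n] y) := dist_triangle _ _ _
      _ < ε/2 + ε/2 := add_lt_add hn2 (by rw [dist_comm]; exact hn3)
      _ = ε := by ring
end

section
/- Let U be a minimal idempotent ultrafilter on ℕ (idempotent, and for every X ∈ U the set {n | X − n ∈ U} is syndetic), let (X,T) be a compact metric dynamical system and x ∈ X. Then y := lim_{n→U} T^n x exists, y is uniformly recurrent, and x, y are proximal. -/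
lemma syndetic_mono {S S' : Set ℕ} (h : S ⊆ S') (hS : Syndetic S) : Syndetic S' := by
  obtain ⟨m, hm⟩ := hS
  exact ⟨m, fun x => by obtain ⟨n, hn, h1, h2⟩ := hm x; exact ⟨n, h hn, h1, h2⟩⟩

/-- For a minimal idempotent ultrafilter `U`, the limit `y = lim_{n→U} T^[n] x` exists,
is uniformly recurrent, and is proximal to `x`. -/
theorem stmt9 (U : Ultrafilter ℕ)
    (hidem : ∀ X : Set ℕ, X ∈ U → {n : ℕ | {m : ℕ | m + n ∈ X} ∈ U} ∈ U)
    (hmin : ∀ X : Set ℕ, X ∈ U → Syndetic {n : ℕ | {m : ℕ | m + n ∈ X} ∈ U})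
    {α : Type*} [MetricSpace α] [CompactSpace α]
    (T : α → α) (hT : Continuous T) (x : α) :
    ∃ y : α, (∀ ε : ℝ, 0 < ε → {n : ℕ | dist (T^[n] x) y < ε} ∈ U) ∧
      UniformlyRecurrent T y ∧ Proximal T x y := by
  have hne : Nonempty α := ⟨x⟩
  set f : ℕ → α := fun n => T^[n] x with hf
  obtain ⟨y, hy⟩ : ∃ y : α, ↑(U.map f) ≤ nhds y := ⟨(U.map f).lim, (U.map f).le_nhds_lim⟩
  have key : ∀ ε : ℝ, 0 < ε → {n : ℕ | dist (T^[n] x) y < ε} ∈ U := by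
    intro ε hε
    have h1 : Metric.ball y ε ∈ U.map f := hy (Metric.ball_mem_nhds y hε)
    have h2 : f ⁻¹' Metric.ball y ε ∈ U := h1
    have : f ⁻¹' Metric.ball y ε = {n : ℕ | dist (T^[n] x) y < ε} := by
      ext n; simp [hf, Metric.mem_ball]
    rwa [this] at h2
  have core : ∀ ε : ℝ, 0 < ε → ∀ n : ℕ,
      {m : ℕ | m + n ∈ {k : ℕ | dist (T^[k] x) y < ε / 2}} ∈ U →
      dist (T^[n] y) y < ε := by
    intro ε hε n hn
    have hc : ContinuousAt (T^[n]) y := (hT.iterate n).continuousAt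
    rcases Metric.continuousAt_iff.mp hc (ε / 2) (by positivity) with ⟨δ, hδ, hball⟩
    have h1 : {m : ℕ | dist (T^[m] x) y < δ} ∈ U := key δ hδ
    obtain ⟨m, hm1, hm2⟩ := Filter.nonempty_of_mem (Filter.inter_mem hn h1)
    have hm1' : dist (T^[m + n] x) y < ε / 2 := hm1
    have hiter : T^[m + n] x = T^[n] (T^[m] x) := by
      rw [add_comm]; exact Function.iterate_add_apply T n m x
    have h3 : dist (T^[n] (T^[m] x)) (T^[n] y) < ε / 2 := hball hm2
    calc dist (T^[n] y) y ≤ dist (T^[n] y) (T^[n] (T^[m] x))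
            + dist (T^[n] (T^[m] x)) y := dist_triangle _ _ _
      _ < ε / 2 + ε / 2 := by
          rw [dist_comm (T^[n] y)]
          exact add_lt_add h3 (by rw [← hiter]; exact hm1')
      _ = ε := by ring
  have hD : ∀ ε : ℝ, 0 < ε → {n : ℕ | dist (T^[n] y) y < ε} ∈ U := by
    intro ε hε
    have h1 := hidem _ (key (ε / 2) (by positivity))
    exact Filter.mem_of_superset h1 fun n hn => core ε hε n hn
  refine ⟨y, key, ?_, ?_⟩
  · intro ε hε
    have hs := hmin _ (key (ε / 2) (by positivity))
    exact syndetic_mono (fun n hn => core ε hε n hn) hs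
  · intro ε hε N
    by_cases h : ∃ n ≥ N, dist (T^[n] x) (T^[n] y) < ε
    · exact h
    push_neg at h
    have hB : {n : ℕ | dist (T^[n] x) (T^[n] y) < ε} ∈ U := by
      have h1 := key (ε / 2) (by positivity)
      have h2 := hD (ε / 2) (by positivity)
      filter_upwards [h1, h2] with n hn1 hn2
      calc dist (T^[n] x) (T^[n] y) ≤ dist (T^[n] x) y + dist y (T^[n] y) :=
            dist_triangle _ _ _
        _ < ε / 2 + ε / 2 := add_lt_add hn1 (by rw [dist_comm]; exact hn2)
        _ = ε := by ring
    have hsub : {n : ℕ | dist (T^[n] x) (T^[n] y) < ε} ⊆ Set.Iio N := by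
      intro n hn
      by_contra hge
      exact absurd hn (not_lt.mpr (h n (not_lt.mp hge)))
    obtain ⟨c, _, hU⟩ := Ultrafilter.eq_pure_of_finite_mem
      ((Set.finite_Iio N).subset hsub) hB
    have hc0 : c = 0 := by
      have h1 : ({c} : Set ℕ) ∈ U := by rw [hU]; exact rfl
      have h2 := hidem {c} h1
      rw [hU] at h2
      simp only [Ultrafilter.mem_pure, Set.mem_setOf_eq, Set.mem_singleton_iff] at h2
      omega
    have hxy : x = y := by
      have hd : ∀ ε' : ℝ, 0 < ε' → dist x y < ε' := by
        intro ε' hε'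
        have h1 := key ε' hε'
        rw [hU, hc0] at h1
        have h2 : (0 : ℕ) ∈ {n : ℕ | dist (T^[n] x) y < ε'} := h1
        simpa using h2
      by_contra hne'
      have hpos : 0 < dist x y := dist_pos.mpr hne'
      exact absurd (hd _ hpos) (lt_irrefl _)
    refine ⟨N, le_rfl, ?_⟩
    rw [hxy]
    simpa using hε
end

section
/- If x, y and y, z are pairs of points in a compact metric dynamical system such that there is a single strictly increasing sequence (n_i) with IP-limit of T^n x equal to y along FS((n_i)) — then x and y are proximal. -/
/-- If `y` is the IP-limit of `T^[n] x` along `FS((n_i))`, then `x` and `y` are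
proximal. -/
theorem stmt19 {X : Type*} [MetricSpace X] [CompactSpace X]
    (T : X → X) (hT : Continuous T) (a : ℕ → ℕ) (ha : StrictMono a) (x y : X)
    (hlim : ∀ ε : ℝ, 0 < ε → ∃ k : ℕ, ∀ s ∈ FS a k, dist (T^[s] x) y < ε) :
    Proximal T x y := by
  intro ε hε N
  obtain ⟨k₁, hk₁⟩ := hlim (ε / 3) (by linarith)
  set m := max k₁ N with hm
  set n := a m with hn
  have hnN : N ≤ n := le_trans (le_max_right _ _) (le_trans (ha.le_apply) le_rfl)
  -- continuity of T^[n] at y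
  have hcont : Continuous (T^[n]) := hT.iterate n
  obtain ⟨δ, hδ, hδ'⟩ := Metric.continuousAt_iff.mp hcont.continuousAt (ε / 3) (by linarith)
  obtain ⟨k₂, hk₂⟩ := hlim δ hδ
  set j := max k₂ (m + 1) with hj
  set s := a j with hs
  have hjm : m < j := lt_of_lt_of_le (Nat.lt_succ_self m) (le_max_right _ _)
  have h1 : dist (T^[n] x) y < ε / 3 := by
    apply hk₁
    exact ⟨{m}, ⟨m, Finset.mem_singleton_self m⟩,
      fun i hi => by simp at hi; simp [hi, hm, le_max_left], by simp [hn]⟩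
  have h2 : dist (T^[n + s] x) y < ε / 3 := by
    apply hk₁
    refine ⟨{m, j}, ⟨m, by simp⟩, ?_, ?_⟩
    · intro i hi
      rcases Finset.mem_insert.mp hi with h | h
      · simp [h, hm, le_max_left]
      · simp at h
        subst h
        exact le_trans (le_max_left _ _) (le_of_lt hjm)
    · rw [Finset.sum_pair (ne_of_lt hjm)]
  have h3 : dist (T^[s] x) y < δ := by
    apply hk₂
    exact ⟨{j}, ⟨j, Finset.mem_singleton_self j⟩,
      fun i hi => by simp at hi; simp [hi, hj, le_max_left], by simp [hs]⟩
  have h4 : dist (T^[n] (T^[s] x)) (T^[n] y) < ε / 3 := hδ' h3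
  have h5 : T^[n] (T^[s] x) = T^[n + s] x :=
    (Function.iterate_add_apply T n s x).symm
  rw [h5] at h4
  refine ⟨n, hnN, ?_⟩
  calc dist (T^[n] x) (T^[n] y)
      ≤ dist (T^[n] x) y + dist y (T^[n + s] x) + dist (T^[n + s] x) (T^[n] y) :=
        dist_triangle4 _ _ _ _
    _ < ε / 3 + ε / 3 + ε / 3 := by
        rw [dist_comm y]
        exact add_lt_add (add_lt_add h1 h2) h4
    _ = ε := by ring
end
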